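/- Let m ≥ 1 and k ≥ 3 be integers and q ∈ (q_{k−1}, 2). For 0 ≤ i ≤ m define L_i(q) = g_{q,k}^i(1) and R_i(q) = g_{q,k}^i(1 + q^{−(m−i)k} π_q(0^{k−3}(01^{k−1})^∞)), and define L_Q(q) = g_{q,k}^m(π_q(1^{k−3}(10^{k−1})^∞)) and R_Q(q) = g_{q,k}^m(1/(q−1)). Then all the interval lengths agree: R_0(q) − L_0(q) = ⋯ = R_m(q) − L_m(q) = R_Q(q) − L_Q(q) = q^{−(m+1)k+2} π_q((1^{k−1}0)^∞). -/

import Mathlib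

open Set

/-- Projection map: the value of the (0-indexed) digit sequence `a` in base `q`,
`π_q(a) = Σ_{j=0}^∞ a_j q^{-(j+1)}`. -/
noncomputable def piQ (q : ℝ) (a : ℕ → ℝ) : ℝ := ∑' j : ℕ, a j / q ^ (j + 1)

/-- `a` is a sequence of digits in `{0,1}`. -/
def IsDigitSeq (a : ℕ → ℝ) : Prop := ∀ j, a j = 0 ∨ a j = 1

/-- `a` is a sequence of digits in `{-1,0,1}`. -/
def IsExtDigitSeq (a : ℕ → ℝ) : Prop := ∀ j, a j = -1 ∨ a j = 0 ∨ a j = 1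

/-- The set of base-`q` expansions of `x`. -/
def SigmaSet (q x : ℝ) : Set (ℕ → ℝ) := {a | IsDigitSeq a ∧ piQ q a = x}

/-- The interval `I_q = [0, 1/(q-1)]`. -/
def Iq (q : ℝ) : Set ℝ := Set.Icc 0 (1 / (q - 1))

/-- The switch region `J_q = [1/q, 1/(q(q-1))]`. -/
def Jq (q : ℝ) : Set ℝ := Set.Icc (1 / q) (1 / (q * (q - 1)))

/-- The set of points of `I_q` having exactly `m` base-`q` expansions. -/
def UqM (q : ℝ) (m : ℕ∞) : Set ℝ := {x | x ∈ Iq q ∧ (SigmaSet q x).encard = m}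

/-- The set of points of `I_q` having a unique base-`q` expansion. -/
def Uq (q : ℝ) : Set ℝ := UqM q 1

/-- `B_m`: the set of bases `q ∈ (1,2)` for which some point has exactly `m` expansions. -/
def Bset (m : ℕ∞) : Set ℝ := {q | q ∈ Set.Ioo (1 : ℝ) 2 ∧ (UqM q m).Nonempty}

/-- `x` is the `k`-Bonacci number: the root in `(1,2)` of `x^k = x^{k-1} + ⋯ + x + 1`. -/
def IsBonacci (k : ℕ) (x : ℝ) : Prop :=
  x ∈ Set.Ioo (1 : ℝ) 2 ∧ x ^ k = ∑ i ∈ Finset.range k, x ^ i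

/-- `a` contains no occurrence of the word `01^k` as a consecutive block. -/
def AvoidsWord01 (k : ℕ) (a : ℕ → ℝ) : Prop :=
  ∀ i, ¬(a i = 0 ∧ ∀ j, 1 ≤ j → j ≤ k → a (i + j) = 1)

/-- `a` contains no occurrence of the word `10^k` as a consecutive block. -/
def AvoidsWord10 (k : ℕ) (a : ℕ → ℝ) : Prop :=
  ∀ i, ¬(a i = 1 ∧ ∀ j, 1 ≤ j → j ≤ k → a (i + j) = 0)

/-- `S_k`: the set of `{0,1}`-sequences avoiding the words `01^k` and `10^k`. -/
def Sset (k : ℕ) : Set (ℕ → ℝ) := {a | IsDigitSeq a ∧ AvoidsWord01 k a ∧ AvoidsWord10 k a}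

/-- `g_{q,k} = f_1^{-(k-1)} ∘ f_0^{-1}`, where `f_0^{-1}(y) = y/q` and `f_1^{-1}(y) = (y+1)/q`. -/
noncomputable def gMap (q : ℝ) (k : ℕ) (x : ℝ) : ℝ := (fun y => (y + 1) / q)^[k - 1] (x / q)

/-- The maps `f_0(x) = qx` (for `b = false`) and `f_1(x) = qx - 1` (for `b = true`). -/
noncomputable def fDigit (q : ℝ) (b : Bool) (x : ℝ) : ℝ := if b then q * x - 1 else q * x

/-- `(a, b)` is a bounded gap of `C`: a bounded connected component of `ℝ \ C`. -/
def IsGap (C : Set ℝ) (a b : ℝ) : Prop :=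
  a < b ∧ a ∈ C ∧ b ∈ C ∧ Set.Ioo a b ∩ C = ∅

/-- The left endpoint of the bridge of `C` lying immediately to the left of the gap `(a, b)`:
the right endpoint of the nearest gap to the left having diameter at least `b - a`
(or `min C` if there is no such gap). -/
noncomputable def leftBridgeStart (C : Set ℝ) (a b : ℝ) : ℝ :=
  sSup ({sInf C} ∪ {d | ∃ c, IsGap C c d ∧ d ≤ a ∧ b - a ≤ d - c})

/-- The right endpoint of the bridge of `C` lying immediately to the right of the gap `(a, b)`. -/
noncomputable def rightBridgeEnd (C : Set ℝ) (a b : ℝ) : ℝ :=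
  sInf ({sSup C} ∪ {c | ∃ d, IsGap C c d ∧ b ≤ c ∧ b - a ≤ d - c})

/-- The (Newhouse) thickness of a compact set `C ⊆ ℝ`: the infimum over all bounded gaps `G`
of the ratio of the length of the bridge on either side of `G` to the length of `G`
(`∞` if `C` has no bounded gap). -/
noncomputable def thickness (C : Set ℝ) : ENNReal :=
  ⨅ p : {p : ℝ × ℝ // IsGap C p.1 p.2},
    ENNReal.ofReal
      (min ((p.1.1 - leftBridgeStart C p.1.1 p.1.2) / (p.1.2 - p.1.1))
        ((rightBridgeEnd C p.1.1 p.1.2 - p.1.2) / (p.1.2 - p.1.1)))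

/-- `B` is contained in a gap of `A`, i.e. in a connected component of `ℝ \ A`. -/
def ContainedInGap (B A : Set ℝ) : Prop :=
  ∃ x ∈ Aᶜ, B ⊆ connectedComponentIn Aᶜ x

/-- Two sets are interleaved if neither is contained in a gap of the other. -/
def Interleaved (A B : Set ℝ) : Prop :=
  ¬ContainedInGap B A ∧ ¬ContainedInGap A B

/-- `A` and `B` are `ε`-strongly interleaved: any compact sets within Hausdorff distance `ε`
of `A` and `B` respectively are interleaved. -/
def StronglyInterleaved (ε : ℝ) (A B : Set ℝ) : Prop :=
  ∀ A' B' : Set ℝ, IsCompact A' → IsCompact B' →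
    EMetric.hausdorffEdist A A' ≤ ENNReal.ofReal ε →
    EMetric.hausdorffEdist B B' ≤ ENNReal.ofReal ε → Interleaved A' B'

/-- The sequence `0^{k-3}(01^{k-1})^∞` (0-indexed). -/
noncomputable def seqG (k : ℕ) : ℕ → ℝ := fun j =>
  if j < k - 3 then 0 else if (j - (k - 3)) % k = 0 then 0 else 1

/-- The sequence `1^{k-3}(10^{k-1})^∞` (0-indexed). -/
noncomputable def seqH (k : ℕ) : ℕ → ℝ := fun j =>
  if j < k - 3 then 1 else if (j - (k - 3)) % k = 0 then 1 else 0

/-- The sequence `(1^{k-1}0)^∞` (0-indexed). -/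
noncomputable def seqP (k : ℕ) : ℕ → ℝ := fun j => if j % k = k - 1 then 0 else 1


/-- Iterating `y ↦ (y+1)/q` contracts differences by `q^n`. -/
lemma aux_iter_affine_sub (q : ℝ) (n : ℕ) (x y : ℝ) :
    (fun y => (y + 1) / q)^[n] x - (fun y => (y + 1) / q)^[n] y = (x - y) / q ^ n := by
  induction n generalizing x y with
  | zero => simp
  | succ n ih =>
    rw [Function.iterate_succ_apply', Function.iterate_succ_apply', pow_succ]
    have := ih x y
    simp only [div_sub_div_same]
    rw [add_sub_add_comm, sub_self, add_zero, ih, div_div]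

lemma aux_gMap_sub (q : ℝ) (k : ℕ) (hk : 1 ≤ k) (x y : ℝ) :
    gMap q k x - gMap q k y = (x - y) / q ^ k := by
  unfold gMap
  rw [aux_iter_affine_sub, div_sub_div_same, div_div, ← pow_succ']
  rw [Nat.sub_add_cancel hk]

lemma aux_gMap_iter_sub (q : ℝ) (k : ℕ) (hk : 1 ≤ k) (i : ℕ) (x y : ℝ) :
    (gMap q k)^[i] x - (gMap q k)^[i] y = (x - y) / q ^ (i * k) := by
  induction i generalizing x y with
  | zero => simp
  | succ i ih =>
    rw [Function.iterate_succ_apply', Function.iterate_succ_apply',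
      aux_gMap_sub q k hk, ih, div_div, ← pow_add, Nat.succ_mul]

lemma aux_summable (q : ℝ) (hq : 1 < q) (a : ℕ → ℝ)
    (ha : ∀ j, 0 ≤ a j ∧ a j ≤ 1) : Summable (fun j => a j / q ^ (j + 1)) := by
  have hq0 : (0:ℝ) < q := lt_trans one_pos hq
  have h1 : (0:ℝ) ≤ 1 / q := by positivity
  have h2 : 1 / q < 1 := by rw [div_lt_one hq0]; exact hq
  have hgeo : Summable (fun j : ℕ => (1 / q) ^ (j + 1)) := by
    simpa [pow_succ] using (summable_geometric_of_lt_one h1 h2).mul_right (1 / q)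
  refine Summable.of_nonneg_of_le (fun j => ?_) (fun j => ?_) hgeo
  · have := (ha j).1; positivity
  · rw [div_pow, one_pow]
    have hd : (0:ℝ) < q ^ (j + 1) := by positivity
    exact div_le_div_of_nonneg_right ((ha j).2) hd.le

lemma aux_seqP_digits (k : ℕ) : ∀ j, 0 ≤ seqP k j ∧ seqP k j ≤ 1 := by
  intro j; unfold seqP; split <;> norm_num

lemma aux_seqG_digits (k : ℕ) : ∀ j, 0 ≤ seqG k j ∧ seqG k j ≤ 1 := by
  intro j; unfold seqG; split
  · norm_num
  · split <;> norm_num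

lemma aux_seqH_digits (k : ℕ) : ∀ j, 0 ≤ seqH k j ∧ seqH k j ≤ 1 := by
  intro j; unfold seqH; split
  · norm_num
  · split <;> norm_num

lemma aux_mod_iff (k : ℕ) (hk : 3 ≤ k) (t : ℕ) : (t + 1) % k = 0 ↔ t % k = k - 1 := by
  have hk0 : 0 < k := by omega
  have hlt := Nat.mod_lt t hk0
  rw [Nat.add_mod, Nat.mod_eq_of_lt (show 1 < k by omega)]
  constructor
  · intro h0
    by_contra hne
    have hlt2 : t % k + 1 < k := by omega
    rw [Nat.mod_eq_of_lt hlt2] at h0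
    omega
  · intro he
    rw [he, show k - 1 + 1 = k from by omega, Nat.mod_self]

lemma aux_seqG_shift (k : ℕ) (hk : 3 ≤ k) (t : ℕ) : seqG k (t + (k - 2)) = seqP k t := by
  unfold seqG seqP
  have h1 : ¬ (t + (k - 2) < k - 3) := by omega
  have h2 : t + (k - 2) - (k - 3) = t + 1 := by omega
  rw [if_neg h1, h2]
  by_cases hr : t % k = k - 1
  · rw [if_pos ((aux_mod_iff k hk t).2 hr), if_pos hr]
  · rw [if_neg (fun h => hr ((aux_mod_iff k hk t).1 h)), if_neg hr]

lemma aux_piQ_seqG (k : ℕ) (hk : 3 ≤ k) (q : ℝ) (hq : 1 < q) :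
    piQ q (seqG k) = piQ q (seqP k) / q ^ (k - 2) := by
  have hsum := aux_summable q hq (seqG k) (aux_seqG_digits k)
  unfold piQ
  rw [← hsum.sum_add_tsum_nat_add (k - 2)]
  have hzero : ∑ j ∈ Finset.range (k - 2), seqG k j / q ^ (j + 1) = 0 := by
    refine Finset.sum_eq_zero (fun j hj => ?_)
    have hj' := Finset.mem_range.1 hj
    have : seqG k j = 0 := by
      unfold seqG
      rcases lt_or_ge j (k - 3) with h | h
      · simp [h]
      · have h0 : j - (k - 3) = 0 := by omega
        simp [h0, Nat.not_lt.mpr h]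
    rw [this, zero_div]
  rw [hzero, zero_add]
  have hterm : ∀ t : ℕ, seqG k (t + (k - 2)) / q ^ (t + (k - 2) + 1) =
      (seqP k t / q ^ (t + 1)) / q ^ (k - 2) := by
    intro t
    rw [aux_seqG_shift k hk t, show t + (k - 2) + 1 = (t + 1) + (k - 2) from by omega,
      pow_add, ← div_div]
  rw [tsum_congr hterm, tsum_div_const]

lemma aux_piQ_seqH (k : ℕ) (hk : 3 ≤ k) (q : ℝ) (hq : 1 < q) :
    piQ q (seqH k) + piQ q (seqG k) = 1 / (q - 1) := by
  have hq0 : (0:ℝ) < q := lt_trans one_pos hq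
  have hH := aux_summable q hq (seqH k) (aux_seqH_digits k)
  have hG := aux_summable q hq (seqG k) (aux_seqG_digits k)
  have h1 : (0:ℝ) ≤ 1 / q := by positivity
  have h2 : 1 / q < 1 := by rw [div_lt_one hq0]; exact hq
  unfold piQ
  rw [← hH.tsum_add hG]
  have hterm : ∀ j : ℕ, seqH k j / q ^ (j + 1) + seqG k j / q ^ (j + 1) = (1 / q) ^ j * (1 / q) := by
    intro j
    have hdig : seqH k j + seqG k j = 1 := by
      unfold seqH seqG
      split
      · norm_num
      · split <;> norm_num
    rw [← add_div, hdig, ← pow_succ, div_pow, one_pow, one_div]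
  rw [tsum_congr hterm, tsum_mul_right, tsum_geometric_of_lt_one h1 h2]
  have hq1 : q - 1 ≠ 0 := by intro h; linarith
  have hqne : q ≠ 0 := ne_of_gt hq0
  field_simp

lemma aux_zpow_helper (q : ℝ) (hq : q ≠ 0) (a b c d : ℤ) (P : ℝ) (h : a - b - c = d) :
    q ^ a * (P / q ^ b) / q ^ c = q ^ d * P := by
  subst h
  rw [zpow_sub₀ hq, zpow_sub₀ hq]
  ring

theorem P_and_Q_common_diameter
    (m k : ℕ) (hm : 1 ≤ m) (hk : 3 ≤ k) (qk1 : ℝ) (hqk1 : IsBonacci (k - 1) qk1)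
    (q : ℝ) (hq : q ∈ Set.Ioo qk1 2) :
    (∀ i ≤ m,
        (gMap q k)^[i] (1 + q ^ (-(((m : ℤ) - (i : ℤ)) * (k : ℤ))) * piQ q (seqG k)) -
            (gMap q k)^[i] 1 =
          q ^ (-(((m : ℤ) + 1) * (k : ℤ)) + 2) * piQ q (seqP k)) ∧
      (gMap q k)^[m] (1 / (q - 1)) - (gMap q k)^[m] (piQ q (seqH k)) =
        q ^ (-(((m : ℤ) + 1) * (k : ℤ)) + 2) * piQ q (seqP k) := by
  have h1q : 1 < q := hqk1.1.1.trans hq.1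
  have hq0 : (0:ℝ) < q := lt_trans one_pos h1q
  have hqne : q ≠ 0 := ne_of_gt hq0
  have hk1 : 1 ≤ k := by omega
  have hPG := aux_piQ_seqG k hk q h1q
  set P := piQ q (seqP k) with hP
  constructor
  · intro i hi
    rw [aux_gMap_iter_sub q k hk1, add_sub_cancel_left, hPG,
      ← zpow_natCast q (i * k), ← zpow_natCast q (k - 2),
      show ((k - 2 : ℕ) : ℤ) = (k : ℤ) - 2 from by omega]
    exact aux_zpow_helper q hqne _ _ _ _ P (by push_cast; ring)
  · rw [aux_gMap_iter_sub q k hk1]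
    have hsub : 1 / (q - 1) - piQ q (seqH k) = piQ q (seqG k) := by
      have := aux_piQ_seqH k hk q h1q
      linarith
    rw [hsub, hPG, ← zpow_natCast q (m * k), ← zpow_natCast q (k - 2),
      show ((k - 2 : ℕ) : ℤ) = (k : ℤ) - 2 from by omega,
      show P / q ^ ((k:ℤ) - 2) / q ^ ((m * k : ℕ) : ℤ)
          = q ^ (0:ℤ) * (P / q ^ ((k:ℤ) - 2)) / q ^ ((m * k : ℕ) : ℤ) from by
        rw [zpow_zero, one_mul]]
    exact aux_zpow_helper q hqne _ _ _ _ P (by push_cast; ring)
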